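/- Let (X,Σ,m) be a σ-finite measure space, p ∈ (1,∞), and let M be an L^p(m)-Banach L^∞(m)-module with pointwise norm |·| : M → L^p(m). Define the pointwise modulus of convexity δ^pw_M(ε) ∈ L^∞(m) as the essential infimum (in the lattice-theoretic sense) of the family {1 - 1_E |(v+w)/2| : v,w ∈ M, E ∈ Σ, |v|=|w|=1 and |v-w|>ε m-a.e. on E}. Then for every ε ∈ (0,2], the Banach-space modulus of convexity satisfies δ_M(ε) ≤ ess inf_X δ^pw_M(ε). -/

import Mathlib

open MeasureTheory Filter
open scoped ENNReal

/-- A module structure over `L^∞(m)` on a real normed space `M`, encoded via a scalar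
multiplication map `smul : L^∞(m) → M → M`; multiplication in `L^∞(m)` and constants are
expressed via a.e. representatives. -/
structure LinftyModuleStruct {X : Type*} [MeasurableSpace X] (m : Measure X)
    (M : Type*) [NormedAddCommGroup M] [Module ℝ M] where
  smul : Lp ℝ ∞ m → M → M
  smul_add : ∀ (f : Lp ℝ ∞ m) (u v : M), smul f (u + v) = smul f u + smul f v
  add_smul : ∀ (f g : Lp ℝ ∞ m) (v : M), smul (f + g) v = smul f v + smul g v
  mul_smul : ∀ (f g h : Lp ℝ ∞ m) (v : M),
    ((h : X → ℝ) =ᵐ[m] fun x => f x * g x) → smul h v = smul f (smul g v)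
  const_smul : ∀ (f : Lp ℝ ∞ m) (c : ℝ) (v : M),
    ((f : X → ℝ) =ᵐ[m] fun _ => c) → smul f v = c • v

/-- `pn` is an `L^p(m)`-pointwise norm on the `L^∞(m)`-module `M` inducing the norm of `M`. -/
structure IsPointwiseNorm {X : Type*} [MeasurableSpace X] (m : Measure X) (p : ℝ)
    {M : Type*} [NormedAddCommGroup M] [Module ℝ M]
    (A : LinftyModuleStruct m M) (pn : M → X → ℝ) : Prop where
  memLp : ∀ v : M, MemLp (pn v) (ENNReal.ofReal p) m
  nonneg : ∀ v : M, ∀ᵐ x ∂m, 0 ≤ pn v x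
  eq_zero_iff : ∀ v : M, (pn v =ᵐ[m] 0) ↔ v = 0
  triangle : ∀ v w : M, ∀ᵐ x ∂m, pn (v + w) x ≤ pn v x + pn w x
  smul_eq : ∀ (f : Lp ℝ ∞ m) (v : M), pn (A.smul f v) =ᵐ[m] fun x => |f x| * pn v x
  norm_eq : ∀ v : M, ‖v‖ = (∫ x, pn v x ^ p ∂m) ^ (1 / p)

/-- The modulus of convexity of a normed space `V`. -/
noncomputable def modulusOfConvexity (V : Type*) [NormedAddCommGroup V] [Module ℝ V]
    (ε : ℝ) : ℝ :=
  sInf {r : ℝ | ∃ v w : V, ‖v‖ = 1 ∧ ‖w‖ = 1 ∧ ε ≤ ‖v - w‖ ∧ r = 1 - ‖(2 : ℝ)⁻¹ • (v + w)‖}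

section Aux

variable {X : Type*} [MeasurableSpace X] {m : Measure X}
variable {M : Type*} [NormedAddCommGroup M] [Module ℝ M]
variable {p : ℝ} {A : LinftyModuleStruct m M} {pn : M → X → ℝ}

lemma LinftyModuleStruct.smul_real (A : LinftyModuleStruct m M) (f : Lp ℝ ∞ m) (c : ℝ)
    (z : M) : A.smul f (c • z) = c • A.smul f z := by
  have hc : MemLp (fun _ : X => c) ∞ m := memLp_top_const c
  set k : Lp ℝ ∞ m := hc.toLp _ with hkdef
  have hkc : (k : X → ℝ) =ᵐ[m] fun _ => c := hc.coeFn_toLp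
  have h1 : A.smul k z = c • z := A.const_smul k c z hkc
  have h2 : A.smul k (A.smul f z) = c • A.smul f z := A.const_smul _ c _ hkc
  have e1 : A.smul (c • f) z = A.smul k (A.smul f z) := by
    refine A.mul_smul k f (c • f) z ?_
    filter_upwards [Lp.coeFn_smul c f, hkc] with x hx hkx
    rw [hx, hkx]; simp [smul_eq_mul]
  have e2 : A.smul (c • f) z = A.smul f (A.smul k z) := by
    refine A.mul_smul f k (c • f) z ?_
    filter_upwards [Lp.coeFn_smul c f, hkc] with x hx hkx
    rw [hx, hkx]; simp [smul_eq_mul, mul_comm]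
  calc A.smul f (c • z) = A.smul f (A.smul k z) := by rw [h1]
    _ = A.smul (c • f) z := e2.symm
    _ = c • A.smul f z := by rw [e1, h2]

variable (hp : 1 < p) (hpn : IsPointwiseNorm m p A pn)
include hp hpn

lemma pn_smul_real (c : ℝ) (z : M) : pn (c • z) =ᵐ[m] fun x => |c| * pn z x := by
  have hc : MemLp (fun _ : X => c) ∞ m := memLp_top_const c
  set k : Lp ℝ ∞ m := hc.toLp _ with hkdef
  have hkc : (k : X → ℝ) =ᵐ[m] fun _ => c := hc.coeFn_toLp
  have h1 : A.smul k z = c • z := A.const_smul k c z hkc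
  rw [← h1]
  filter_upwards [hpn.smul_eq k z, hkc] with x hx hkx
  rw [hx, hkx]

lemma integral_pn_nonneg (z : M) : 0 ≤ ∫ x, pn z x ^ p ∂m := by
  refine integral_nonneg_of_ae ?_
  filter_upwards [hpn.nonneg z] with x hx
  exact Real.rpow_nonneg hx p

lemma norm_smul_pn (c : ℝ) (z : M) : ‖c • z‖ = |c| * ‖z‖ := by
  have hp0 : (0:ℝ) < p := by linarith
  rw [hpn.norm_eq, hpn.norm_eq z]
  have h1 : ∫ x, pn (c • z) x ^ p ∂m = |c| ^ p * ∫ x, pn z x ^ p ∂m := by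
    rw [← integral_const_mul]
    refine integral_congr_ae ?_
    filter_upwards [pn_smul_real hp hpn c z, hpn.nonneg z] with x hx hx0
    rw [hx, Real.mul_rpow (abs_nonneg c) hx0]
  rw [h1, Real.mul_rpow (Real.rpow_nonneg (abs_nonneg c) p) (integral_pn_nonneg hp hpn z),
    ← Real.rpow_mul (abs_nonneg c), mul_one_div_cancel hp0.ne', Real.rpow_one]

lemma mem_modSet_nonneg {ε r : ℝ}
    (hr : r ∈ {r : ℝ | ∃ v w : M, ‖v‖ = 1 ∧ ‖w‖ = 1 ∧ ε ≤ ‖v - w‖ ∧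
      r = 1 - ‖(2 : ℝ)⁻¹ • (v + w)‖}) : 0 ≤ r := by
  obtain ⟨v, w, hv, hw, -, rfl⟩ := hr
  have h3 : ‖v + w‖ ≤ 2 := by have := norm_add_le v w; rw [hv, hw] at this; linarith
  have : ‖(2:ℝ)⁻¹ • (v + w)‖ ≤ 1 := by
    rw [norm_smul_pn hp hpn]
    rw [abs_of_pos (by norm_num : (0:ℝ) < 2⁻¹)]
    nlinarith [norm_nonneg (v + w)]
  linarith

lemma modulusOfConvexity_nonneg (ε : ℝ) : 0 ≤ modulusOfConvexity M ε :=
  Real.sInf_nonneg fun _ hx => mem_modSet_nonneg hp hpn hx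

lemma modulusOfConvexity_le_one (ε : ℝ) : modulusOfConvexity M ε ≤ 1 := by
  rcases Set.eq_empty_or_nonempty
      {r : ℝ | ∃ v w : M, ‖v‖ = 1 ∧ ‖w‖ = 1 ∧ ε ≤ ‖v - w‖ ∧
        r = 1 - ‖(2 : ℝ)⁻¹ • (v + w)‖} with hS | ⟨r, hr⟩
  · rw [modulusOfConvexity, hS, Real.sInf_empty]; norm_num
  · have h1 : modulusOfConvexity M ε ≤ r :=
      csInf_le ⟨0, fun _ hx => mem_modSet_nonneg hp hpn hx⟩ hr
    obtain ⟨v, w, -, -, -, rfl⟩ := hr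
    have := norm_nonneg ((2:ℝ)⁻¹ • (v + w))
    linarith

set_option linter.unusedSectionVars false

lemma integrable_pn_rpow (z : M) : Integrable (fun x => pn z x ^ p) m := by
  have hp0 : (0:ℝ) < p := by linarith
  have h := (hpn.memLp z).integrable_norm_rpow
    (ne_of_gt (ENNReal.ofReal_pos.2 hp0)) ENNReal.ofReal_ne_top
  rw [ENNReal.toReal_ofReal hp0.le] at h
  refine h.congr ?_
  filter_upwards [hpn.nonneg z] with x hx
  rw [Real.norm_eq_abs, abs_of_nonneg hx]

lemma key_avg_bound {ε : ℝ} (hε0 : 0 < ε) (v w : M) {F : Set X}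
    (hF : MeasurableSet F) (h0 : m F ≠ 0) (hfin : m F ≠ ⊤)
    (haeF : ∀ᵐ x ∂m, x ∈ F → pn v x = 1 ∧ pn w x = 1 ∧ ε < pn (v - w) x) :
    ∫ x in F, pn ((2:ℝ)⁻¹ • (v + w)) x ^ p ∂m
      ≤ (1 - modulusOfConvexity M ε) ^ p * (m F).toReal := by
  have hp0 : (0:ℝ) < p := by linarith
  have hip : (0:ℝ) < 1 / p := by positivity
  set μF : ℝ := (m F).toReal with hμFdef
  have hμF : 0 < μF := ENNReal.toReal_pos h0 hfin
  set f : Lp ℝ ∞ m := indicatorConstLp ∞ hF hfin (1:ℝ) with hfdef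
  have hfcoe : (f : X → ℝ) =ᵐ[m] F.indicator fun _ => (1:ℝ) := indicatorConstLp_coeFn
  -- norm of A.smul f z
  have normS : ∀ z : M, ‖A.smul f z‖ = (∫ x in F, pn z x ^ p ∂m) ^ (1/p) := by
    intro z
    rw [hpn.norm_eq]
    congr 1
    have h1 : (fun x => pn (A.smul f z) x ^ p) =ᵐ[m]
        F.indicator (fun x => pn z x ^ p) := by
      filter_upwards [hpn.smul_eq f z, hfcoe] with x hx hfx
      rw [hx, hfx]
      by_cases hxF : x ∈ F
      · simp [Set.indicator_of_mem hxF]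
      · simp [Set.indicator_of_notMem hxF, Real.zero_rpow hp0.ne']
    rw [integral_congr_ae h1, integral_indicator hF]
  set r : ℝ := μF ^ (1/p) with hrdef
  have hr : 0 < r := Real.rpow_pos_of_pos hμF _
  -- norms of S v, S w
  have hIv : ∫ x in F, pn v x ^ p ∂m = μF := by
    have h1 : ∫ x in F, pn v x ^ p ∂m = ∫ _ in F, (1:ℝ) ∂m := by
      refine setIntegral_congr_ae hF ?_
      filter_upwards [haeF] with x hx hxF
      rw [(hx hxF).1, Real.one_rpow]
    rw [h1, setIntegral_const, smul_eq_mul, mul_one]; rfl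
  have hIw : ∫ x in F, pn w x ^ p ∂m = μF := by
    have h1 : ∫ x in F, pn w x ^ p ∂m = ∫ _ in F, (1:ℝ) ∂m := by
      refine setIntegral_congr_ae hF ?_
      filter_upwards [haeF] with x hx hxF
      rw [(hx hxF).2.1, Real.one_rpow]
    rw [h1, setIntegral_const, smul_eq_mul, mul_one]; rfl
  have hSv : ‖A.smul f v‖ = r := by rw [normS, hIv]
  have hSw : ‖A.smul f w‖ = r := by rw [normS, hIw]
  -- subtraction
  have hsub : A.smul f v - A.smul f w = A.smul f (v - w) := by
    have h1 := A.smul_add f v ((-1:ℝ) • w)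
    rw [A.smul_real f (-1) w] at h1
    simpa [sub_eq_add_neg] using h1.symm
  -- lower bound on the distance
  have hdist : ε * r ≤ ‖A.smul f v - A.smul f w‖ := by
    rw [hsub, normS]
    have hlow : ε ^ p * μF ≤ ∫ x in F, pn (v - w) x ^ p ∂m := by
      have h1 : ∫ _ in F, ε ^ p ∂m ≤ ∫ x in F, pn (v - w) x ^ p ∂m := by
        refine setIntegral_mono_ae_restrict
          (integrableOn_const hfin)
          ((integrable_pn_rpow hp hpn (v - w)).integrableOn) ?_
        rw [EventuallyLE, ae_restrict_iff' hF]
        filter_upwards [haeF] with x hx hxF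
        exact Real.rpow_le_rpow hε0.le (hx hxF).2.2.le hp0.le
      rw [setIntegral_const, smul_eq_mul, mul_comm] at h1
      exact h1
    calc ε * r = (ε ^ p * μF) ^ (1/p) := by
          rw [Real.mul_rpow (Real.rpow_nonneg hε0.le p) hμF.le,
            ← Real.rpow_mul hε0.le, mul_one_div_cancel hp0.ne', Real.rpow_one]
      _ ≤ (∫ x in F, pn (v - w) x ^ p ∂m) ^ (1/p) :=
          Real.rpow_le_rpow (by positivity) hlow hip.le
  -- normalized vectors
  set v' : M := r⁻¹ • A.smul f v with hv'def
  set w' : M := r⁻¹ • A.smul f w with hw'def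
  have habs : |r⁻¹| = r⁻¹ := abs_of_pos (by positivity)
  have hv' : ‖v'‖ = 1 := by
    rw [hv'def, norm_smul_pn hp hpn, hSv, habs, inv_mul_cancel₀ hr.ne']
  have hw' : ‖w'‖ = 1 := by
    rw [hw'def, norm_smul_pn hp hpn, hSw, habs, inv_mul_cancel₀ hr.ne']
  have hd' : ε ≤ ‖v' - w'‖ := by
    rw [hv'def, hw'def, ← smul_sub, norm_smul_pn hp hpn, habs]
    calc ε = r⁻¹ * (ε * r) := by field_simp
      _ ≤ r⁻¹ * ‖A.smul f v - A.smul f w‖ := by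
          exact mul_le_mul_of_nonneg_left hdist (by positivity)
  set δ : ℝ := modulusOfConvexity M ε with hδdef
  have hδ : δ ≤ 1 - ‖(2:ℝ)⁻¹ • (v' + w')‖ :=
    csInf_le ⟨0, fun _ hx => mem_modSet_nonneg hp hpn hx⟩
      ⟨v', w', hv', hw', hd', rfl⟩
  -- identify the midpoint
  have hmid : (2:ℝ)⁻¹ • (v' + w') = r⁻¹ • A.smul f ((2:ℝ)⁻¹ • (v + w)) := by
    rw [A.smul_real f, A.smul_add f v w]
    rw [hv'def, hw'def, ← smul_add, smul_comm]
  have hnmid : ‖(2:ℝ)⁻¹ • (v' + w')‖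
      = r⁻¹ * (∫ x in F, pn ((2:ℝ)⁻¹ • (v + w)) x ^ p ∂m) ^ (1/p) := by
    rw [hmid, norm_smul_pn hp hpn, habs, normS]
  set a : ℝ := ∫ x in F, pn ((2:ℝ)⁻¹ • (v + w)) x ^ p ∂m with hadef
  have ha0 : 0 ≤ a := by
    refine setIntegral_nonneg_of_ae_restrict ?_
    refine ae_restrict_of_ae ?_
    filter_upwards [hpn.nonneg ((2:ℝ)⁻¹ • (v + w))] with x hx
    exact Real.rpow_nonneg hx p
  have hc0 : 0 ≤ 1 - δ := by
    have := modulusOfConvexity_le_one hp hpn (M := M) ε; linarith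
  have hle : a ^ (1/p) ≤ (1 - δ) * r := by
    have h1 : r⁻¹ * a ^ (1/p) ≤ 1 - δ := by rw [← hnmid]; linarith
    calc a ^ (1/p) = r * (r⁻¹ * a ^ (1/p)) := by field_simp
      _ ≤ r * (1 - δ) := mul_le_mul_of_nonneg_left h1 hr.le
      _ = (1 - δ) * r := mul_comm _ _
  calc a = (a ^ (1/p)) ^ p := by
        rw [← Real.rpow_mul ha0, one_div_mul_cancel hp0.ne', Real.rpow_one]
    _ ≤ ((1 - δ) * r) ^ p :=
        Real.rpow_le_rpow (Real.rpow_nonneg ha0 _) hle hp0.le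
    _ = (1 - δ) ^ p * μF := by
        rw [Real.mul_rpow hc0 hr.le, hrdef, ← Real.rpow_mul hμF.le,
          one_div_mul_cancel hp0.ne', Real.rpow_one]

end Aux

/-- The defining family of the pointwise modulus of convexity `δ^pw_M(ε)`: the functions
`1 - 1_E·|(v+w)/2|` over all `v, w ∈ M` and measurable `E` with `|v| = |w| = 1` and
`|v - w| > ε` a.e. on `E`. -/
def pwModulusFamily {X : Type*} [MeasurableSpace X] (m : Measure X) (p : ℝ)
    {M : Type*} [NormedAddCommGroup M] [Module ℝ M]
    (A : LinftyModuleStruct m M) (pn : M → X → ℝ) (ε : ℝ) : Set (X → ℝ) :=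
  {u | ∃ (v w : M) (E : Set X), MeasurableSet E ∧
    (∀ᵐ x ∂m, x ∈ E → pn v x = 1 ∧ pn w x = 1 ∧ ε < pn (v - w) x) ∧
    u = fun x => 1 - E.indicator (fun _ => (1 : ℝ)) x * pn ((2 : ℝ)⁻¹ • (v + w)) x}

/-- If `g` is the pointwise modulus of convexity `δ^pw_M(ε)` of an `L^p(m)`-Banach
`L^∞(m)`-module `M` (i.e. the largest a.e. lower bound of the defining family), then the
Banach-space modulus of convexity satisfies `δ_M(ε) ≤ ess inf g`. -/
theorem modulus_le_essInf_pointwise_modulus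
    {X : Type*} [MeasurableSpace X] (m : Measure X) [SigmaFinite m]
    {M : Type*} [NormedAddCommGroup M] [Module ℝ M] [CompleteSpace M]
    (p : ℝ) (hp : 1 < p)
    (A : LinftyModuleStruct m M) (pn : M → X → ℝ) (hpn : IsPointwiseNorm m p A pn)
    (ε : ℝ) (hε : ε ∈ Set.Ioc (0 : ℝ) 2)
    (g : X → ℝ)
    (hg_lb : ∀ u ∈ pwModulusFamily m p A pn ε, ∀ᵐ x ∂m, g x ≤ u x)
    (hg_max : ∀ h : X → ℝ, (∀ u ∈ pwModulusFamily m p A pn ε, ∀ᵐ x ∂m, h x ≤ u x) →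
      ∀ᵐ x ∂m, h x ≤ g x) :
    modulusOfConvexity M ε ≤ essInf g m := by
  obtain ⟨hε0, hε2⟩ := hε
  have hp0 : (0:ℝ) < p := by linarith
  set δ : ℝ := modulusOfConvexity M ε with hδdef
  have hδ1 : δ ≤ 1 := modulusOfConvexity_le_one hp hpn ε
  -- Step 1: δ is an a.e. lower bound of every member of the family.
  have core : ∀ u ∈ pwModulusFamily m p A pn ε, ∀ᵐ x ∂m, δ ≤ u x := by
    rintro u ⟨v, w, E, hE, hae, rfl⟩
    set h : X → ℝ := pn ((2:ℝ)⁻¹ • (v + w)) with hhdef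
    set c : ℝ := 1 - δ with hcdef
    have hc0 : 0 ≤ c := by rw [hcdef]; linarith
    have hmeas : AEStronglyMeasurable h m := (hpn.memLp _).1
    set h' : X → ℝ := hmeas.mk h with hh'def
    have hh' : h =ᵐ[m] h' := hmeas.ae_eq_mk
    have hmeas' : Measurable h' := hmeas.measurable_mk
    -- each bad set is null
    have hnull : ∀ n : ℕ, m (E ∩ {x | c + 1/(n+1) ≤ h' x}) = 0 := by
      intro n
      by_contra hne
      have hBmeas : MeasurableSet (E ∩ {x | c + 1/(n+1) ≤ h' x}) :=
        hE.inter (measurableSet_le measurable_const hmeas')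
      obtain ⟨F, hFmeas, hFsub, hF0, hFfin⟩ :=
        Measure.exists_subset_measure_lt_top hBmeas (pos_iff_ne_zero.mpr hne)
      have haeF : ∀ᵐ x ∂m, x ∈ F → pn v x = 1 ∧ pn w x = 1 ∧ ε < pn (v - w) x := by
        filter_upwards [hae] with x hx hxF
        exact hx (hFsub hxF).1
      have hkey := key_avg_bound hp hpn hε0 v w hFmeas hF0.ne' hFfin.ne haeF
      have hμF : 0 < (m F).toReal := ENNReal.toReal_pos hF0.ne' hFfin.ne
      have hlow : (c + 1/(n+1:ℝ)) ^ p * (m F).toReal ≤ ∫ x in F, h x ^ p ∂m := by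
        have h1 : ∫ _ in F, (c + 1/(n+1:ℝ)) ^ p ∂m ≤ ∫ x in F, h x ^ p ∂m := by
          refine setIntegral_mono_ae_restrict
            (integrableOn_const hFfin.ne)
            ((integrable_pn_rpow hp hpn ((2:ℝ)⁻¹ • (v + w))).integrableOn) ?_
          rw [EventuallyLE, ae_restrict_iff' hFmeas]
          filter_upwards [hh'] with x hx hxF
          have h2 : c + 1/(n+1:ℝ) ≤ h x := by rw [hx]; exact (hFsub hxF).2
          exact Real.rpow_le_rpow (by positivity) h2 hp0.le
        rw [setIntegral_const, smul_eq_mul, mul_comm] at h1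
        exact h1
      have hstrict : c ^ p < (c + 1/(n+1:ℝ)) ^ p :=
        Real.rpow_lt_rpow hc0 (lt_add_of_pos_right c (by positivity)) hp0
      have hkey' : ∫ x in F, h x ^ p ∂m ≤ c ^ p * (m F).toReal := hkey
      nlinarith [hkey', hlow, hstrict, hμF]
    -- hence h ≤ c a.e. on E
    have hEbound : ∀ᵐ x ∂m, x ∈ E → h x ≤ c := by
      have h1 : ∀ᵐ x ∂m, ∀ n : ℕ, x ∉ E ∩ {x | c + 1/(n+1) ≤ h' x} := by
        rw [ae_all_iff]
        intro n
        exact measure_eq_zero_iff_ae_notMem.mp (hnull n)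
      filter_upwards [h1, hh'] with x hx hhx hxE
      by_contra hlt
      push_neg at hlt
      obtain ⟨n, hn⟩ := exists_nat_one_div_lt (show (0:ℝ) < h x - c by linarith)
      exact hx n ⟨hxE, by simp only [Set.mem_setOf_eq]; rw [← hhx]; linarith⟩
    filter_upwards [hEbound] with x hx
    by_cases hxE : x ∈ E
    · have := hx hxE
      rw [Set.indicator_of_mem hxE]
      simp only [one_mul]
      linarith
    · rw [Set.indicator_of_notMem hxE]
      simp only [zero_mul, sub_zero]
      linarith
  -- Step 2: conclude
  have hg := hg_max (fun _ => δ) core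
  rcases eq_or_ne m 0 with hm | hm
  · -- trivial measure: M is trivial, both sides vanish
    subst hm
    have hM : ∀ z : M, z = 0 := by
      intro z
      refine (hpn.eq_zero_iff z).1 ?_
      simp [Filter.EventuallyEq, ae_zero]
    have hset : {r : ℝ | ∃ v w : M, ‖v‖ = 1 ∧ ‖w‖ = 1 ∧ ε ≤ ‖v - w‖ ∧
        r = 1 - ‖(2 : ℝ)⁻¹ • (v + w)‖} = ∅ := by
      ext r
      simp only [Set.mem_setOf_eq, Set.mem_empty_iff_false, iff_false, not_exists]
      rintro v w ⟨hv, -⟩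
      rw [hM v, norm_zero] at hv
      norm_num at hv
    have hδ0 : δ = 0 := by rw [hδdef, modulusOfConvexity, hset, Real.sInf_empty]
    have hess : essInf g (0 : Measure X) = 0 := by
      simp only [essInf, ae_zero, Filter.liminf, Filter.limsInf, Filter.map_bot,
        Filter.eventually_bot, Set.setOf_true]
      exact Real.sSup_univ
    rw [hδ0, hess]
  · haveI : (ae m).NeBot := ae_neBot.mpr hm
    -- g is a.e. bounded above by 1 (using the trivial family member)
    have htriv : (fun _ : X => (1:ℝ)) ∈ pwModulusFamily m p A pn ε := by
      refine ⟨0, 0, ∅, MeasurableSet.empty, by simp, ?_⟩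
      funext x
      simp
    have hub : ∀ᵐ x ∂m, g x ≤ 1 := hg_lb _ htriv
    exact le_liminf_of_le (isCoboundedUnder_ge_of_eventually_le _ hub) hg
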